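/- Every singular transformation of {1,...,n} is a product of idempotent transformations of rank n−1. -/

import Mathlib

/-- The full transformation monoid on `{1,...,n}`, modeled as `Function.End (Fin n)`
(multiplication is composition). -/
abbrev Tn (n : ℕ) := Function.End (Fin n)

/-- A permutation viewed as a transformation. -/
def ofPerm {n : ℕ} (g : Equiv.Perm (Fin n)) : Tn n := ⇑g

/-- The rank of a transformation: the size of its image. -/
def rnk {n : ℕ} (a : Tn n) : ℕ := (Finset.univ.image a).card

/-- The symmetric group embedded in `Tn n` as a set. -/
def perms (n : ℕ) : Set (Tn n) := Set.range (fun g : Equiv.Perm (Fin n) => ofPerm g)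

/-- The `S_n`-conjugacy class of a transformation. -/
def conjClass {n : ℕ} (t : Tn n) : Set (Tn n) :=
  {s | ∃ g : Equiv.Perm (Fin n), s = ofPerm g⁻¹ * t * ofPerm g}

namespace Howie
variable {n : ℕ}

def E (i j : Fin n) : Tn n := fun x => if x = i then j else x
lemma mul_apply (a b : Tn n) (x : Fin n) : (a * b) x = a (b x) := rfl
lemma E_apply (i j x : Fin n) : E i j x = if x = i then j else x := rfl
lemma ofPerm_apply (g : Equiv.Perm (Fin n)) (x : Fin n) : ofPerm g x = g x := rfl

lemma E_idem {i j : Fin n} (h : j ≠ i) : E i j * E i j = E i j := by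
  funext x
  simp only [mul_apply, E_apply]
  split_ifs <;> simp_all [E_apply]

lemma image_E {i j : Fin n} (h : j ≠ i) :
    Finset.univ.image (E i j) = Finset.univ.erase i := by
  ext x
  show x ∈ Finset.univ.image (fun y => E i j y) ↔ _
  simp only [Finset.mem_image, Finset.mem_erase, Finset.mem_univ, and_true]
  constructor
  · rintro ⟨y, -, rfl⟩
    simp only [E_apply]; split_ifs <;> simp_all
  · intro hx; exact ⟨x, trivial, by simp [E_apply, hx]⟩

lemma rnk_E {i j : Fin n} (h : j ≠ i) : rnk (E i j) = n - 1 := by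
  rw [rnk, image_E h, Finset.card_erase_of_mem (Finset.mem_univ i)]
  simp

def Good (a : Tn n) : Prop :=
  ∃ L : List (Tn n), L ≠ [] ∧ (∀ e ∈ L, e * e = e ∧ rnk e = n - 1) ∧ a = L.prod

lemma Good.mul {a b : Tn n} (ha : Good a) (hb : Good b) : Good (a * b) := by
  obtain ⟨L1, h1, h2, rfl⟩ := ha
  obtain ⟨L2, g1, g2, rfl⟩ := hb
  refine ⟨L1 ++ L2, by simp [h1], ?_, (List.prod_append).symm⟩
  intro e he
  rcases List.mem_append.1 he with h | h
  exacts [h2 e h, g2 e h]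

lemma good_E {i j : Fin n} (h : j ≠ i) : Good (E i j) :=
  ⟨[E i j], by simp, by intro e he; simp at he; subst he; exact ⟨E_idem h, rnk_E h⟩, by simp⟩

lemma swap_mul_E {a b z y : Fin n} (haz : a ≠ z) (hbz : b ≠ z)
    (hay : a ≠ y) (hby : b ≠ y) (hzy : z ≠ y) :
    ofPerm (Equiv.swap a b) * E z y = E z a * E a b * E b z * E z y := by
  funext x
  simp only [mul_apply, E_apply, ofPerm_apply, Equiv.swap_apply_def]
  split_ifs <;> simp_all

lemma swap_mul_E_left {b z y : Fin n} (hby : b ≠ y) (hbz : b ≠ z) (hzy : z ≠ y) :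
    ofPerm (Equiv.swap y b) * E z y = E z b * E b y * E y z := by
  funext x
  simp only [mul_apply, E_apply, ofPerm_apply, Equiv.swap_apply_def]
  split_ifs <;> simp_all

lemma lemB : ∀ m : ℕ, ∀ g : Equiv.Perm (Fin n), g.support.card ≤ m →
    ∀ z y : Fin n, y ≠ z → g z = z → Good (ofPerm g * E z y) := by
  intro m
  induction m with
  | zero =>
    intro g hg z y hyz hz
    have hg1 : g = 1 := by
      rwa [Nat.le_zero, Equiv.Perm.card_support_eq_zero] at hg
    subst hg1
    have h1 : ofPerm (1 : Equiv.Perm (Fin n)) * E z y = E z y := by funext x; rfl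
    rw [h1]; exact good_E hyz
  | succ m ih =>
    intro g hg z y hyz hz
    by_cases hg1 : g = 1
    · subst hg1
      have h1 : ofPerm (1 : Equiv.Perm (Fin n)) * E z y = E z y := by funext x; rfl
      rw [h1]; exact good_E hyz
    · obtain ⟨a, ha⟩ : ∃ a, g a ≠ a := by
        by_contra hcon
        push_neg at hcon
        exact hg1 (Equiv.ext fun x => by simp [hcon x])
      have haz : a ≠ z := by rintro rfl; exact ha hz
      have hbz : g a ≠ z := fun e => haz (g.injective (e.trans hz.symm))
      have hab : a ≠ g a := Ne.symm ha
      set t := Equiv.swap a (g a) with ht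
      set h := t * g with hh
      have hsupp : h.support.card < g.support.card :=
        Equiv.Perm.card_support_swap_mul ha
      have hsupp' : h.support.card ≤ m := by omega
      have hgth : g = t * h := by
        rw [hh, ← mul_assoc, ht, Equiv.swap_mul_self, one_mul]
      have hhz : h z = z := by
        rw [hh]
        simp only [Equiv.Perm.mul_apply, hz, ht]
        exact Equiv.swap_apply_of_ne_of_ne (Ne.symm haz) (Ne.symm hbz)
      have hinvz : h⁻¹ z = z := by
        have := congrArg (⇑h⁻¹) hhz
        simp only [Equiv.Perm.coe_inv, Equiv.symm_apply_apply] at this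
        exact this.symm
      set a' := h⁻¹ a with ha'
      set b' := h⁻¹ (g a) with hb'
      have ha'z : a' ≠ z := fun e => haz (by
        have := congrArg (⇑h) (e.trans hinvz.symm)
        simpa [ha'] using this)
      have hb'z : b' ≠ z := fun e => hbz (by
        have := congrArg (⇑h) (e.trans hinvz.symm)
        simpa [hb'] using this)
      have ha'b' : a' ≠ b' := fun e => hab (h⁻¹.injective e)
      have hpt : ∀ v : Fin n, t (h v) = h (Equiv.swap a' b' v) := by
        intro v
        rcases eq_or_ne v a' with rfl | hva
        · rw [Equiv.swap_apply_left, ha', hb', Equiv.Perm.coe_inv, Equiv.apply_symm_apply,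
            Equiv.apply_symm_apply, ht, Equiv.swap_apply_left]
        · rcases eq_or_ne v b' with rfl | hvb
          · rw [Equiv.swap_apply_right, ha', hb', Equiv.Perm.coe_inv, Equiv.apply_symm_apply,
              Equiv.apply_symm_apply, ht, Equiv.swap_apply_right]
          · rw [Equiv.swap_apply_of_ne_of_ne hva hvb, ht]
            refine Equiv.swap_apply_of_ne_of_ne ?_ ?_
            · intro e; exact hva (by rw [ha', ← e]; simp)
            · intro e; exact hvb (by rw [hb', ← e]; simp)
      have hcomm : ofPerm g * E z y = ofPerm h * (ofPerm (Equiv.swap a' b') * E z y) := by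
        funext x
        simp only [mul_apply, ofPerm_apply]
        rw [hgth, Equiv.Perm.mul_apply]
        exact hpt _
      by_cases hy1 : y = a'
      · subst hy1
        rw [hcomm, swap_mul_E_left (Ne.symm ha'b') hb'z (Ne.symm ha'z),
          ← mul_assoc, ← mul_assoc]
        exact ((ih h hsupp' z b' hb'z hhz).mul (good_E ha'b')).mul (good_E (Ne.symm ha'z))
      · by_cases hy2 : y = b'
        · subst hy2
          rw [hcomm, Equiv.swap_comm, swap_mul_E_left ha'b' ha'z (Ne.symm hb'z),
            ← mul_assoc, ← mul_assoc]
          exact ((ih h hsupp' z a' ha'z hhz).mul (good_E (Ne.symm ha'b'))).mul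
            (good_E (Ne.symm hb'z))
        · rw [hcomm, swap_mul_E ha'z hb'z (fun e => hy1 e.symm) (fun e => hy2 e.symm)
            (Ne.symm hyz), ← mul_assoc, ← mul_assoc, ← mul_assoc]
          exact (((ih h hsupp' z a' ha'z hhz).mul (good_E (Ne.symm ha'b'))).mul
            (good_E (Ne.symm hb'z))).mul (good_E hyz)


open Classical in
noncomputable def mv (a : Tn n) : Finset (Fin n) := Finset.univ.filter (fun x => a x ≠ x)

lemma lemD : ∀ m : ℕ, ∀ α : Tn n, (mv α).card ≤ m → ¬Function.Injective α →
    rnk α = n - 1 → Good α := by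
  intro m
  induction m with
  | zero =>
    intro α hm hinj hr
    exfalso
    obtain ⟨i, j, he, hij⟩ := Function.not_injective_iff.mp hinj
    have : α i ≠ i ∨ α j ≠ j := by
      by_contra hcon
      push_neg at hcon
      exact hij (hcon.1 ▸ hcon.2 ▸ he)
    rcases this with h | h
    · have : i ∈ mv α := by simp [mv, h]
      have := Finset.card_pos.mpr ⟨i, this⟩
      omega
    · have : j ∈ mv α := by simp [mv, h]
      have := Finset.card_pos.mpr ⟨j, this⟩
      omega
  | succ m ih =>
    intro α hm hinj hr
    obtain ⟨i, j, he, hij⟩ := Function.not_injective_iff.mp hinj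
    have hn1 : 0 < n := i.pos
    have him_ne : Finset.univ.image α ≠ Finset.univ := by
      intro e
      have := congrArg Finset.card e
      rw [← rnk] at this
      simp [Finset.card_univ] at this
      omega
    obtain ⟨z, -, hz⟩ := Finset.exists_of_ssubset
      (Finset.ssubset_univ_iff.mpr him_ne)
    have himage : Finset.univ.image α = Finset.univ.erase z := by
      apply Finset.eq_of_subset_of_card_le
      · intro x hx
        refine Finset.mem_erase.mpr ⟨?_, Finset.mem_univ x⟩
        rintro rfl; exact hz hx
      · rw [Finset.card_erase_of_mem (Finset.mem_univ z), ← rnk, hr, Finset.card_univ]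
        simp
    have hz_im : ∀ x, α x ≠ z := by
      intro x e
      exact hz (e ▸ Finset.mem_image_of_mem α (Finset.mem_univ x))
    have hwz : α z ≠ z := hz_im z
    by_cases hB : ∃ y, y ≠ z ∧ α y = α z
    · -- Case B: missing point z is in the kernel pair
      obtain ⟨y, hy1, hy2⟩ := hB
      have himS : (Finset.univ.erase z).image α = Finset.univ.image α := by
        apply Finset.eq_of_subset_of_card_le
        · exact Finset.image_subset_image (Finset.erase_subset z Finset.univ)
        · apply Finset.card_le_card
          intro x hx
          obtain ⟨u, -, hu⟩ := Finset.mem_image.mp hx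
          rcases eq_or_ne u z with rfl | huz
          · exact Finset.mem_image.mpr ⟨y, Finset.mem_erase.mpr ⟨hy1, Finset.mem_univ y⟩,
              hy2.trans hu⟩
          · exact Finset.mem_image.mpr ⟨u, Finset.mem_erase.mpr ⟨huz, Finset.mem_univ u⟩, hu⟩
      have hinjOn : Set.InjOn α (Finset.univ.erase z) := by
        apply Finset.injOn_of_card_image_eq
        rw [himS, ← rnk, hr, Finset.card_erase_of_mem (Finset.mem_univ z), Finset.card_univ]
        simp
      set g₀ : Fin n → Fin n := fun x => if x = z then z else α x with hg₀
      have hg₀inj : Function.Injective g₀ := by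
        intro u v e
        simp only [hg₀] at e
        split_ifs at e with h1 h2 h2
        · exact h1.trans h2.symm
        · exact absurd e.symm (hz_im v)
        · exact absurd e (hz_im u)
        · exact hinjOn (by simp [Finset.mem_coe, Finset.mem_erase, h1])
            (by simp [Finset.mem_coe, Finset.mem_erase, h2]) e
      set g := Equiv.ofBijective g₀ (Finite.injective_iff_bijective.mp hg₀inj) with hg
      have hge : ⇑g = g₀ := rfl
      have hgz : g z = z := by
        show g₀ z = z
        simp [hg₀]
      have hkey : α = ofPerm g * E z y := by
        funext x
        simp only [mul_apply, ofPerm_apply, hge, hg₀, E_apply]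
        rcases eq_or_ne x z with rfl | hx
        · simp [hy1, hy2.symm]
        · simp [hx]
      rw [hkey]
      exact lemB (Equiv.Perm.support g).card g le_rfl z y hy1 hgz
    · -- Case A
      push_neg at hB
      have hiz : i ≠ z := by
        rintro rfl
        exact hB j (Ne.symm hij) he.symm
      have hjz : j ≠ z := by
        rintro rfl
        exact hB i hij he
      set α' : Tn n := fun x => if x = z then z else α x with hα'
      have hsplit : α = E z (α z) * α' := by
        funext x
        simp only [mul_apply, hα', E_apply]
        rcases eq_or_ne x z with rfl | hx
        · show α x = E x (α x) (if x = x then x else α x)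
          rw [if_pos rfl, E_apply, if_pos rfl]
        · show α x = E z (α z) (if x = z then z else α x)
          rw [if_neg hx, E_apply, if_neg (hz_im x)]
      have hinj' : ¬Function.Injective α' := by
        intro hcon
        apply hij
        apply hcon
        simp only [hα']
        rw [if_neg hiz, if_neg hjz]
        exact he
      set S := (Finset.univ.erase z).image α with hS
      have hwS : α z ∉ S := by
        intro hx
        obtain ⟨u, hu, hu2⟩ := Finset.mem_image.mp hx
        exact hB u (Finset.mem_erase.mp hu).1 hu2
      have hzS : z ∉ S := by
        intro hx
        refine hz ?_
        exact Finset.image_subset_image (Finset.erase_subset z Finset.univ) hx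
      have himα : Finset.univ.image α = insert (α z) S := by
        conv_lhs => rw [← Finset.insert_erase (Finset.mem_univ z)]
        rw [Finset.image_insert (f := α)]
      have hcardS : S.card + 1 = n - 1 := by
        rw [← hr, rnk, himα, Finset.card_insert_of_notMem hwS]
      have himα' : Finset.univ.image α' = insert z S := by
        ext x
        constructor
        · intro hx
          obtain ⟨u, -, rfl⟩ := Finset.mem_image.mp hx
          rcases eq_or_ne u z with rfl | hu
          · simp [hα']
          · have h0 : α' u = α u := by rw [hα']; simp [hu]
            rw [h0]
            exact Finset.mem_insert_of_mem (Finset.mem_image.mpr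
              ⟨u, Finset.mem_erase.mpr ⟨hu, Finset.mem_univ u⟩, rfl⟩)
        · intro hx
          rcases Finset.mem_insert.mp hx with rfl | hx
          · exact Finset.mem_image.mpr ⟨x, Finset.mem_univ x, by simp [hα']⟩
          · obtain ⟨u, hu, rfl⟩ := Finset.mem_image.mp hx
            exact Finset.mem_image.mpr ⟨u, Finset.mem_univ u,
              by rw [hα']; simp [(Finset.mem_erase.mp hu).1]⟩
      have hr' : rnk α' = n - 1 := by
        rw [rnk, himα', Finset.card_insert_of_notMem hzS, hcardS]
      have hmv : mv α' ⊆ (mv α).erase z := by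
        intro x hx
        simp only [mv, Finset.mem_filter, hα'] at hx
        rcases eq_or_ne x z with rfl | hxz
        · simp at hx
        · refine Finset.mem_erase.mpr ⟨hxz, ?_⟩
          simp only [mv, Finset.mem_filter, Finset.mem_univ, true_and]
          rw [if_neg hxz] at hx
          exact hx.2
      have hzmv : z ∈ mv α := by simp [mv, hwz]
      have hcard : (mv α').card ≤ m := by
        have h1 := Finset.card_le_card hmv
        have h2 := Finset.card_erase_of_mem hzmv
        omega
      rw [hsplit]
      exact (good_E hwz).mul (ih α' hcard hinj' hr')

lemma main : ∀ k : ℕ, ∀ a : Tn n, n ≤ rnk a + k → ¬Function.Bijective a → Good a := by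
  intro k
  induction k with
  | zero =>
    intro a hk ha
    exfalso
    apply ha
    apply Finite.surjective_iff_bijective.mp
    have him : Finset.univ.image a = Finset.univ := by
      apply Finset.eq_of_subset_of_card_le (Finset.subset_univ _)
      rw [Finset.card_univ, Fintype.card_fin, ← rnk]
      omega
    intro x
    have hx : x ∈ Finset.univ.image a := by rw [him]; exact Finset.mem_univ x
    obtain ⟨u, -, hu⟩ := Finset.mem_image.mp hx
    exact ⟨u, hu⟩
  | succ k ih =>
    intro a hk ha
    have hninj : ¬Function.Injective a := fun h => ha (Finite.injective_iff_bijective.mp h)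
    have hnsurj : ¬Function.Surjective a := fun h => ha (Finite.surjective_iff_bijective.mp h)
    have him_ne : Finset.univ.image a ≠ Finset.univ := by
      intro e
      apply hnsurj
      intro x
      have hx : x ∈ Finset.univ.image a := by rw [e]; exact Finset.mem_univ x
      obtain ⟨u, -, hu⟩ := Finset.mem_image.mp hx
      exact ⟨u, hu⟩
    obtain ⟨z, -, hz⟩ := Finset.exists_of_ssubset (Finset.ssubset_univ_iff.mpr him_ne)
    have hrlt : rnk a < n := by
      have := Finset.card_lt_card (Finset.ssubset_univ_iff.mpr him_ne)
      rwa [Finset.card_univ, Fintype.card_fin, ← rnk] at this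
    by_cases hr : rnk a = n - 1
    · exact lemD (mv a).card a le_rfl hninj hr
    · obtain ⟨i, j, he, hij⟩ := Function.not_injective_iff.mp hninj
      set a' : Tn n := fun x => if x = i then z else a x with ha'
      have hsplit : a = a' * E i j := by
        funext x
        simp only [mul_apply, ha', E_apply]
        rcases eq_or_ne x i with rfl | hx
        · show a x = (if E x j x = x then z else a (E x j x))
          rw [E_apply, if_pos rfl, if_neg (Ne.symm hij), he]
        · show a x = (if E i j x = i then z else a (E i j x))
          rw [E_apply, if_neg hx, if_neg hx]
      have himS : (Finset.univ.erase i).image a = Finset.univ.image a := by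
        apply Finset.eq_of_subset_of_card_le
        · exact Finset.image_subset_image (Finset.erase_subset i Finset.univ)
        · apply Finset.card_le_card
          intro x hx
          obtain ⟨u, -, hu⟩ := Finset.mem_image.mp hx
          rcases eq_or_ne u i with rfl | hui
          · exact Finset.mem_image.mpr ⟨j, Finset.mem_erase.mpr ⟨Ne.symm hij, Finset.mem_univ j⟩,
              he.symm.trans hu⟩
          · exact Finset.mem_image.mpr ⟨u, Finset.mem_erase.mpr ⟨hui, Finset.mem_univ u⟩, hu⟩
      have hima' : Finset.univ.image a' = insert z ((Finset.univ.erase i).image a) := by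
        ext x
        constructor
        · intro hx
          obtain ⟨u, -, rfl⟩ := Finset.mem_image.mp hx
          rcases eq_or_ne u i with rfl | hu
          · simp [ha']
          · have h0 : a' u = a u := by rw [ha']; simp [hu]
            rw [h0]
            exact Finset.mem_insert_of_mem (Finset.mem_image.mpr
              ⟨u, Finset.mem_erase.mpr ⟨hu, Finset.mem_univ u⟩, rfl⟩)
        · intro hx
          rcases Finset.mem_insert.mp hx with rfl | hx
          · exact Finset.mem_image.mpr ⟨i, Finset.mem_univ i, by simp [ha']⟩
          · obtain ⟨u, hu, rfl⟩ := Finset.mem_image.mp hx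
            exact Finset.mem_image.mpr ⟨u, Finset.mem_univ u,
              by rw [ha']; simp [(Finset.mem_erase.mp hu).1]⟩
      have hzS : z ∉ (Finset.univ.erase i).image a := by
        rw [himS]; exact hz
      have hr' : rnk a' = rnk a + 1 := by
        rw [rnk, hima', Finset.card_insert_of_notMem hzS, himS, ← rnk]
      have ha'bij : ¬Function.Bijective a' := by
        intro hcon
        have : Finset.univ.image a' = Finset.univ := by
          apply Finset.eq_of_subset_of_card_le (Finset.subset_univ _)
          rw [Finset.card_image_of_injective _ hcon.1]
        have := congrArg Finset.card this
        rw [← rnk, hr', Finset.card_univ, Fintype.card_fin] at this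
        omega
      rw [hsplit]
      exact (ih a' (by omega) ha'bij).mul (good_E (Ne.symm hij))

end Howie

/-- Every singular transformation is a product of idempotents of rank `n - 1`. -/
theorem stmt7 (n : ℕ) (a : Tn n) (ha : ¬ Function.Bijective a) :
    ∃ L : List (Tn n), L ≠ [] ∧ (∀ e ∈ L, e * e = e ∧ rnk e = n - 1) ∧ a = L.prod :=
  Howie.main n a (by omega) ha
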